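/- Principal logarithm of a simple factor: let b be a skew-Hermitian 3×3 complex matrix with b² = −β²·𝟙 for some real β with 0 < β < π, and let U = exp(b). Then Re((1/3)·tr(U)) = cos β, hence arccos(Re((1/3)·tr(U))) = β, and (U − Uᴴ)/2 = (sin(β)/β)·b, so that b = (β / sin β)·(U − Uᴴ)/2. -/

import Mathlib

open Matrix

set_option maxHeartbeats 800000

/-- Principal logarithm of a simple factor: if `b` is skew-Hermitian with
`b² = −β² • 𝟙`, `0 < β < π`, and `U = exp b`, then `Re((1/3)tr U) = cos β`, hence
`arccos (Re((1/3)tr U)) = β`, and `(U − Uᴴ)/2 = (sin β / β) • b`, so that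
`b = (β / sin β) • (U − Uᴴ)/2`. -/
theorem principal_logarithm_simple_factor
    (b : Matrix (Fin 3) (Fin 3) ℂ) (hskew : bᴴ = -b) (β : ℝ)
    (hβ0 : 0 < β) (hβπ : β < Real.pi)
    (hb : b ^ 2 = -(((β : ℂ)) ^ 2) • (1 : Matrix (Fin 3) (Fin 3) ℂ))
    (U : Matrix (Fin 3) (Fin 3) ℂ) (hU : U = NormedSpace.exp b) :
    ((1/3 : ℂ) * U.trace).re = Real.cos β ∧
    Real.arccos (((1/3 : ℂ) * U.trace).re) = β ∧
    (1/2 : ℂ) • (U - Uᴴ) = (((Real.sin β / β : ℝ) : ℂ)) • b ∧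
    b = (((β / Real.sin β : ℝ) : ℂ)) • ((1/2 : ℂ) • (U - Uᴴ)) := by
  have hβne : (β : ℂ) ≠ 0 := by exact_mod_cast hβ0.ne'
  -- powers of b
  have heven : ∀ k : ℕ, b ^ (2 * k) = ((-(β:ℂ)^2) ^ k) • (1 : Matrix (Fin 3) (Fin 3) ℂ) := by
    intro k
    induction k with
    | zero => simp
    | succ n ih =>
      have h2 : 2 * (n + 1) = 2 * n + 2 := by ring
      rw [h2, pow_add, ih, hb, smul_mul_smul_comm, one_mul, ← pow_succ]
  have hodd : ∀ k : ℕ, b ^ (2 * k + 1) = ((-(β:ℂ)^2) ^ k) • b := by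
    intro k
    rw [pow_add, heven, pow_one, smul_mul_assoc, one_mul]
  -- the exponential sum
  have hsumEven : HasSum (fun k : ℕ => ((Nat.factorial (2 * k) : ℂ))⁻¹ • b ^ (2 * k))
      (((Real.cos β : ℂ)) • (1 : Matrix (Fin 3) (Fin 3) ℂ)) := by
    have h := (Complex.hasSum_cos (β : ℂ)).smul_const (1 : Matrix (Fin 3) (Fin 3) ℂ)
    rw [← Complex.ofReal_cos] at h
    convert h using 2 with k
    rw [heven, smul_smul]
    congr 1
    rw [neg_pow, ← pow_mul]
    field_simp
  have hsumOdd : HasSum (fun k : ℕ => ((Nat.factorial (2 * k + 1) : ℂ))⁻¹ • b ^ (2 * k + 1))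
      ((((Real.sin β / β : ℝ) : ℂ)) • b) := by
    have h := ((Complex.hasSum_sin (β : ℂ)).div_const (β : ℂ)).smul_const b
    have : (Complex.sin β / β) = (((Real.sin β / β : ℝ) : ℂ)) := by
      push_cast [Complex.ofReal_sin]; ring
    rw [this] at h
    convert h using 2 with k
    rw [hodd, smul_smul]
    congr 1
    have hf : ((Nat.factorial (2 * k + 1) : ℂ)) ≠ 0 := by
      exact_mod_cast (Nat.factorial_ne_zero _)
    rw [neg_pow, ← pow_mul]
    field_simp [hβne, hf]
    ring
  have hexp : U = ((Real.cos β : ℂ)) • (1 : Matrix (Fin 3) (Fin 3) ℂ) +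
      (((Real.sin β / β : ℝ) : ℂ)) • b := by
    have hS : HasSum (fun n : ℕ => ((Nat.factorial n : ℂ))⁻¹ • b ^ n)
        (((Real.cos β : ℂ)) • (1 : Matrix (Fin 3) (Fin 3) ℂ) +
          (((Real.sin β / β : ℝ) : ℂ)) • b) :=
      HasSum.even_add_odd hsumEven hsumOdd
    rw [hU, NormedSpace.exp_eq_tsum (𝕂 := ℂ)]
    exact hS.tsum_eq
  -- trace of b is purely imaginary
  have htr : (b.trace).re = 0 := by
    have h1 : (bᴴ).trace = star b.trace := Matrix.trace_conjTranspose b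
    rw [hskew, Matrix.trace_neg] at h1
    have := congrArg Complex.re h1
    simp [Complex.re] at this
    linarith [this]
  -- trace of U
  have htrU : ((1/3 : ℂ) * U.trace).re = Real.cos β := by
    rw [hexp]
    simp only [Matrix.trace_add, Matrix.trace_smul, Matrix.trace_one]
    have h3 : (Matrix.trace (1 : Matrix (Fin 3) (Fin 3) ℂ)) = 3 := by
      simp [Matrix.trace_one]
    simp only [smul_eq_mul]
    rw [mul_add]
    simp [Complex.add_re, Complex.mul_re, htr, Fintype.card_fin, Complex.cos_ofReal_re]
    ring
  refine ⟨htrU, ?_, ?_, ?_⟩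
  · rw [htrU]
    exact Real.arccos_cos hβ0.le hβπ.le
  · have hUH : Uᴴ = ((Real.cos β : ℂ)) • (1 : Matrix (Fin 3) (Fin 3) ℂ) -
        (((Real.sin β / β : ℝ) : ℂ)) • b := by
      rw [hexp]
      rw [Matrix.conjTranspose_add, Matrix.conjTranspose_smul, Matrix.conjTranspose_smul,
        Matrix.conjTranspose_one, hskew]
      simp only [Complex.star_def, Complex.conj_ofReal, smul_neg, sub_eq_add_neg]
    rw [hUH, hexp]
    module
  · have hUH : (1/2 : ℂ) • (U - Uᴴ) = (((Real.sin β / β : ℝ) : ℂ)) • b := by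
      have hUH : Uᴴ = ((Real.cos β : ℂ)) • (1 : Matrix (Fin 3) (Fin 3) ℂ) -
          (((Real.sin β / β : ℝ) : ℂ)) • b := by
        rw [hexp]
        rw [Matrix.conjTranspose_add, Matrix.conjTranspose_smul, Matrix.conjTranspose_smul,
          Matrix.conjTranspose_one, hskew]
        simp only [Complex.star_def, Complex.conj_ofReal, smul_neg, sub_eq_add_neg]
      rw [hUH, hexp]
      module
    rw [hUH, smul_smul]
    have hsin : Real.sin β ≠ 0 := Real.sin_pos_of_pos_of_lt_pi hβ0 hβπ |>.ne'
    have : (((β / Real.sin β : ℝ) : ℂ)) * (((Real.sin β / β : ℝ) : ℂ)) = 1 := by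
      rw [← Complex.ofReal_mul]
      norm_cast
      field_simp
    rw [this, one_smul]
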